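/- Let (β,γ) be antiferromagnetic and λ > 0, let x* be the unique positive solution of x = (1 + γλx²)/(β + λx²), and let I be a nondegenerate interval of positive reals. Then there do not exist constants c, K ∈ ℝ such that the function F(x) := c·log(x/x*) + K satisfies, for all y ∈ I, the equation F((1 + γλx*y)/(β + λx*y)) = 1 − ((1 − βγ)λx*y)/((1 + γλx*y)(β + λx*y))·(F(x*) + F(y) − 1). -/

import Mathlib

/-- `(β, γ)` is antiferromagnetic: both are nonnegative, `βγ < 1`, and not both are zero. -/
def Antiferro (β γ : ℝ) : Prop :=
  0 ≤ β ∧ 0 ≤ γ ∧ β * γ < 1 ∧ (β ≠ 0 ∨ γ ≠ 0)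

/-- Key derivative computation: if the functional identity holds on `[a,b]` then a certain
product vanishes on `(a,b)`. -/
lemma deriv_key (β γ w c A B : ℝ) (hβ : 0 ≤ β) (hγ : 0 ≤ γ) (hβγ : β * γ < 1) (hw : 0 < w)
    (a b : ℝ) (ha : 0 < a)
    (hEq : ∀ y ∈ Set.Icc a b,
      c * (Real.log (1 + γ * (w * y)) - Real.log (β + w * y)) + B =
      1 - (1 - β * γ) * (w * y) / ((1 + γ * (w * y)) * (β + w * y)) * (A + c * Real.log y))
    {y : ℝ} (hy : y ∈ Set.Ioo a b) :
    (β - γ * w ^ 2 * y ^ 2) * (A + c * Real.log y) = 0 := by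
  have hy0 : 0 < y := ha.trans hy.1
  have hN : (0:ℝ) < 1 + γ * (w * y) :=
    add_pos_of_pos_of_nonneg one_pos (mul_nonneg hγ (mul_pos hw hy0).le)
  have hM : (0:ℝ) < β + w * y := add_pos_of_nonneg_of_pos hβ (mul_pos hw hy0)
  have hN' : HasDerivAt (fun t : ℝ => 1 + γ * (w * t)) (γ * w) y := by
    simpa using (((hasDerivAt_id y).const_mul w).const_mul γ).const_add 1
  have hM' : HasDerivAt (fun t : ℝ => β + w * t) w y := by
    simpa using ((hasDerivAt_id y).const_mul w).const_add β
  have hΦ : HasDerivAt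
      (fun t : ℝ => c * (Real.log (1 + γ * (w * t)) - Real.log (β + w * t)) + B)
      (-(c * ((1 - β * γ) * w) / ((1 + γ * (w * y)) * (β + w * y)))) y := by
    have h := (((hN'.log hN.ne').sub (hM'.log hM.ne')).const_mul c).add_const B
    refine h.congr_deriv ?_
    field_simp
    ring
  have hnum : HasDerivAt (fun t : ℝ => (1 - β * γ) * (w * t)) ((1 - β * γ) * w) y := by
    simpa using (((hasDerivAt_id y).const_mul w).const_mul (1 - β * γ))
  have hden := hN'.mul hM'
  have hq : HasDerivAt (fun t : ℝ => A + c * Real.log t) (c * y⁻¹) y := by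
    simpa using ((Real.hasDerivAt_log hy0.ne').const_mul c).const_add A
  have hg := hnum.div hden (mul_pos hN hM).ne'
  have hΨ : HasDerivAt
      (fun t : ℝ => 1 - (1 - β * γ) * (w * t) / ((1 + γ * (w * t)) * (β + w * t)) *
        (A + c * Real.log t))
      (-((1 - β * γ) * w * (β - γ * w ^ 2 * y ^ 2) / ((1 + γ * (w * y)) * (β + w * y)) ^ 2 *
          (A + c * Real.log y))
        - c * ((1 - β * γ) * w) / ((1 + γ * (w * y)) * (β + w * y))) y := by
    have h := (hg.mul hq).const_sub 1
    refine h.congr_deriv ?_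
    simp only [Pi.mul_apply, Pi.div_apply]
    field_simp
    ring
  have hev : (fun t : ℝ => c * (Real.log (1 + γ * (w * t)) - Real.log (β + w * t)) + B)
      =ᶠ[nhds y] (fun t : ℝ => 1 - (1 - β * γ) * (w * t) /
        ((1 + γ * (w * t)) * (β + w * t)) * (A + c * Real.log t)) := by
    filter_upwards [Ioo_mem_nhds hy.1 hy.2] with t ht
    exact hEq t (Set.Ioo_subset_Icc_self ht)
  have hd := hev.deriv_eq
  rw [hΦ.deriv, hΨ.deriv] at hd
  have h0 : (1 - β * γ) * w * (β - γ * w ^ 2 * y ^ 2) /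
      ((1 + γ * (w * y)) * (β + w * y)) ^ 2 * (A + c * Real.log y) = 0 := by linarith
  rcases mul_eq_zero.mp h0 with h1 | h1
  · have hden2 : ((1 + γ * (w * y)) * (β + w * y)) ^ 2 ≠ 0 := by positivity
    have h2 := (div_eq_zero_iff.mp h1).resolve_right hden2
    have h3 : (1 - β * γ) * w ≠ 0 := ne_of_gt (mul_pos (by linarith) hw)
    have h4 := (mul_eq_zero.mp h2).resolve_left h3
    rw [h4, zero_mul]
  · rw [h1, mul_zero]

lemma pair1 (β γ w : ℝ) (hne : β ≠ 0 ∨ γ ≠ 0) (hγ : 0 ≤ γ) (hw : 0 < w)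
    {y1 y2 : ℝ} (h01 : 0 < y1) (h12 : y1 < y2)
    (e1 : β - γ * w ^ 2 * y1 ^ 2 = 0) (e2 : β - γ * w ^ 2 * y2 ^ 2 = 0) : False := by
  rcases eq_or_lt_of_le hγ with hγ0 | hγpos
  · rcases hne with hβ | hγne
    · apply hβ; rw [← hγ0] at e1; linarith
    · exact hγne hγ0.symm
  · nlinarith [mul_pos (mul_pos hγpos (pow_pos hw 2))
      (mul_pos (add_pos h01 (h01.trans h12)) (sub_pos.mpr h12))]

lemma pair2 (c A : ℝ) (hc : c ≠ 0) {y1 y2 : ℝ} (h01 : 0 < y1) (h12 : y1 < y2)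
    (e1 : A + c * Real.log y1 = 0) (e2 : A + c * Real.log y2 = 0) : False := by
  have hlt := Real.log_lt_log h01 h12
  have : c * Real.log y1 = c * Real.log y2 := by linarith
  have := mul_left_cancel₀ hc this
  linarith

/-- Let `(β,γ)` be antiferromagnetic, `λ > 0`, `x*` the unique positive
fixpoint of `x ↦ (1 + γλx²)/(β + λx²)`, and let `I` be a nondegenerate interval of positive
reals.  Then no function of the form `F(x) = c·log(x/x*) + K` satisfies, for all `y ∈ I`,
`F((1+γλx*y)/(β+λx*y)) = 1 − ((1−βγ)λx*y)/((1+γλx*y)(β+λx*y))·(F(x*) + F(y) − 1)`. -/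
theorem no_logarithmic_solution (β γ lam xs : ℝ) (hanti : Antiferro β γ) (hlam : 0 < lam)
    (hxs : 0 < xs) (hfix : xs = (1 + γ * lam * xs ^ 2) / (β + lam * xs ^ 2))
    (I : Set ℝ) (hIpos : I ⊆ Set.Ioi 0) (hIconn : I.OrdConnected)
    (hInd : ∃ a ∈ I, ∃ b ∈ I, a < b) :
    ¬ ∃ c K : ℝ, ∀ y ∈ I,
      (fun x => c * Real.log (x / xs) + K) ((1 + γ * lam * (xs * y)) / (β + lam * (xs * y))) =
        1 - (1 - β * γ) * lam * (xs * y) /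
            ((1 + γ * lam * (xs * y)) * (β + lam * (xs * y))) *
          ((fun x => c * Real.log (x / xs) + K) xs +
            (fun x => c * Real.log (x / xs) + K) y - 1) := by
  obtain ⟨hβ, hγ, hβγ, hne⟩ := hanti
  rintro ⟨c, K, h⟩
  obtain ⟨a, haI, b, hbI, hab⟩ := hInd
  have hsub : Set.Icc a b ⊆ I := hIconn.out haI hbI
  have ha0 : 0 < a := hIpos haI
  set w := lam * xs with hw'
  have hw : 0 < w := mul_pos hlam hxs
  have hEq : ∀ y ∈ Set.Icc a b,
      c * (Real.log (1 + γ * (w * y)) - Real.log (β + w * y)) + (K - c * Real.log xs) =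
      1 - (1 - β * γ) * (w * y) / ((1 + γ * (w * y)) * (β + w * y)) *
        ((2 * K - c * Real.log xs - 1) + c * Real.log y) := by
    intro y hy
    have hy0 : 0 < y := hIpos (hsub hy)
    have hE := h y (hsub hy)
    simp only [] at hE
    have e1 : γ * lam * (xs * y) = γ * (w * y) := by rw [hw']; ring
    have e2 : lam * (xs * y) = w * y := by rw [hw']; ring
    rw [e1, e2] at hE
    have hN : (0:ℝ) < 1 + γ * (w * y) :=
      add_pos_of_pos_of_nonneg one_pos (mul_nonneg hγ (mul_pos hw hy0).le)
    have hM : (0:ℝ) < β + w * y := add_pos_of_nonneg_of_pos hβ (mul_pos hw hy0)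
    rw [Real.log_div (div_pos hN hM).ne' hxs.ne', Real.log_div hN.ne' hM.ne',
      div_self hxs.ne', Real.log_one, Real.log_div hy0.ne' hxs.ne'] at hE
    linear_combination hE
  have hkey : ∀ y ∈ Set.Ioo a b,
      (β - γ * w ^ 2 * y ^ 2) * ((2 * K - c * Real.log xs - 1) + c * Real.log y) = 0 :=
    fun y hy => deriv_key β γ w c (2 * K - c * Real.log xs - 1) (K - c * Real.log xs)
      hβ hγ hβγ hw a b ha0 hEq hy
  -- three points in (a,b)
  set y1 : ℝ := (3 * a + b) / 4 with hy1'
  set y2 : ℝ := (a + b) / 2 with hy2'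
  set y3 : ℝ := (a + 3 * b) / 4 with hy3'
  have hy1 : y1 ∈ Set.Ioo a b := ⟨by rw [hy1']; linarith, by rw [hy1']; linarith⟩
  have hy2 : y2 ∈ Set.Ioo a b := ⟨by rw [hy2']; linarith, by rw [hy2']; linarith⟩
  have hy3 : y3 ∈ Set.Ioo a b := ⟨by rw [hy3']; linarith, by rw [hy3']; linarith⟩
  have h01 : 0 < y1 := ha0.trans hy1.1
  have h12 : y1 < y2 := by rw [hy1', hy2']; linarith
  have h23 : y2 < y3 := by rw [hy2', hy3']; linarith
  have h02 : 0 < y2 := h01.trans h12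
  have h13 : y1 < y3 := h12.trans h23
  by_cases hc : c = 0
  · by_cases hA : 2 * K - c * Real.log xs - 1 = 0
    · have hK : K = 1 / 2 := by rw [hc, zero_mul] at hA; linarith
      have hE := h a haI
      simp only [hc, zero_mul, zero_add] at hE
      rw [hK] at hE
      norm_num at hE
    · rw [hc, zero_mul] at hA
      have hA1 : (2 * K - c * Real.log xs - 1) + c * Real.log y1 ≠ 0 := by
        rw [hc, zero_mul, zero_mul, add_zero]; exact hA
      have hA2 : (2 * K - c * Real.log xs - 1) + c * Real.log y2 ≠ 0 := by
        rw [hc, zero_mul, zero_mul, add_zero]; exact hA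
      have e1 := (mul_eq_zero.mp (hkey y1 hy1)).resolve_right hA1
      have e2 := (mul_eq_zero.mp (hkey y2 hy2)).resolve_right hA2
      exact pair1 β γ w hne hγ hw h01 h12 e1 e2
  · rcases mul_eq_zero.mp (hkey y1 hy1) with e1 | f1 <;>
      rcases mul_eq_zero.mp (hkey y2 hy2) with e2 | f2 <;>
      rcases mul_eq_zero.mp (hkey y3 hy3) with e3 | f3
    · exact pair1 β γ w hne hγ hw h01 h12 e1 e2
    · exact pair1 β γ w hne hγ hw h01 h12 e1 e2
    · exact pair1 β γ w hne hγ hw h01 h13 e1 e3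
    · exact pair2 c _ hc h02 h23 f2 f3
    · exact pair1 β γ w hne hγ hw h02 h23 e2 e3
    · exact pair2 c _ hc h01 h13 f1 f3
    · exact pair2 c _ hc h01 h12 f1 f2
    · exact pair2 c _ hc h01 h12 f1 f2
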